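/- Let A ∈ ℂ^{n×n} have eigenvalue λ₀ with algebraic multiplicity 2k+1 and geometric multiplicity 1, with left and right Jordan chains u₁,…,u_{2k+1} and v₁,…,v_{2k+1}. Set U = [u₁ … u_k], V = [v₁ … v_k], r = u_{k+1}/(v_{k+1}*u_{k+1}), and let R*, L satisfy R*V = U*L = I_k. Then the characteristic polynomial of Â = A + (λ₁ − λ₀)(V R* + v_{k+1} r* + L U*) equals that of A multiplied by ((λ₁ − x)/(λ₀ − x))^{2k+1}. -/

import Mathlib

open Matrix Polynomial

/-- Matrix whose columns are the chain vectors `w 1, …, w k`. -/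
def chainMat {n : ℕ} (k : ℕ) (w : ℕ → Fin n → ℂ) : Matrix (Fin n) (Fin k) ℂ :=
  Matrix.of fun s i => w ((i : ℕ) + 1) s

namespace OddShiftAux

variable {n : ℕ}

/-- truncated resolvent applied to a Jordan chain -/
def resVec (g : ℂ) (w : ℕ → Fin n → ℂ) : ℕ → Fin n → ℂ
  | 0 => 0
  | (j+1) => g • (resVec g w j + w (j+1))

lemma dot_sum {ι : Type*} (s : Finset ι) (y : Fin n → ℂ) (f : ι → Fin n → ℂ) :
    y ⬝ᵥ (∑ i ∈ s, f i) = ∑ i ∈ s, y ⬝ᵥ f i := by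
  simp only [dotProduct, Finset.sum_apply, Finset.mul_sum]
  rw [Finset.sum_comm]

lemma dot_resVec (g : ℂ) (w : ℕ → Fin n → ℂ) (y : Fin n → ℂ) (j : ℕ) :
    y ⬝ᵥ (resVec g w j) = ∑ l ∈ Finset.range j, g ^ (j - l) * (y ⬝ᵥ w (l+1)) := by
  induction j with
  | zero => simp [resVec]
  | succ j ih =>
    rw [Finset.sum_range_succ]
    show y ⬝ᵥ (g • (resVec g w j + w (j+1))) = _
    rw [dotProduct_smul, dotProduct_add, ih, smul_eq_mul, mul_add, Finset.mul_sum]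
    congr 1
    · apply Finset.sum_congr rfl
      intro l hl
      rw [Finset.mem_range] at hl
      rw [← mul_assoc, ← pow_succ']
      congr 2
      omega
    · simp

lemma resVec_dot (g : ℂ) (w : ℕ → Fin n → ℂ) (y : Fin n → ℂ) (j : ℕ) :
    (resVec g w j) ⬝ᵥ y = ∑ l ∈ Finset.range j, g ^ (j - l) * (w (l+1) ⬝ᵥ y) := by
  induction j with
  | zero => simp [resVec]
  | succ j ih =>
    rw [Finset.sum_range_succ]
    show (g • (resVec g w j + w (j+1))) ⬝ᵥ y = _
    rw [smul_dotProduct, add_dotProduct, ih, smul_eq_mul, mul_add, Finset.mul_sum]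
    congr 1
    · apply Finset.sum_congr rfl
      intro l hl
      rw [Finset.mem_range] at hl
      rw [← mul_assoc, ← pow_succ']
      congr 2
      omega
    · simp

section chains

variable {k : ℕ} (A : Matrix (Fin n) (Fin n) ℂ) (lam0 : ℂ) (u v : ℕ → Fin n → ℂ)

variable
    (huS : ∀ i, 1 ≤ i → i + 1 ≤ 2 * k + 1 →
      Matrix.vecMul (star (u (i + 1))) A = lam0 • star (u (i + 1)) + star (u i))
    (hv1 : A.mulVec (v 1) = lam0 • v 1)
    (hvS : ∀ j, 1 ≤ j → j + 1 ≤ 2 * k + 1 →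
      A.mulVec (v (j + 1)) = lam0 • v (j + 1) + v j)

include huS hvS in
lemma t_step {i j : ℕ} (hi1 : 1 ≤ i) (hi : i + 1 ≤ 2*k+1) (hj1 : 1 ≤ j) (hj : j + 1 ≤ 2*k+1) :
    star (u i) ⬝ᵥ v (j+1) = star (u (i+1)) ⬝ᵥ v j := by
  have h1 := congrArg (fun w => w ⬝ᵥ v (j+1)) (huS i hi1 hi)
  have h2 : star (u (i+1)) ⬝ᵥ (A *ᵥ v (j+1)) = (star (u (i+1)) ᵥ* A) ⬝ᵥ v (j+1) :=
    dotProduct_mulVec _ _ _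
  rw [hvS j hj1 hj] at h2
  simp only [add_dotProduct, smul_dotProduct, dotProduct_add, dotProduct_smul,
    smul_eq_mul] at h1 h2
  linear_combination -h1 - h2

include huS hv1 in
lemma t_base {i : ℕ} (hi1 : 1 ≤ i) (hi : i + 1 ≤ 2*k+1) :
    star (u i) ⬝ᵥ v 1 = 0 := by
  have h1 := congrArg (fun w => w ⬝ᵥ v 1) (huS i hi1 hi)
  have h2 : star (u (i+1)) ⬝ᵥ (A *ᵥ v 1) = (star (u (i+1)) ᵥ* A) ⬝ᵥ v 1 :=
    dotProduct_mulVec _ _ _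
  rw [hv1] at h2
  simp only [add_dotProduct, smul_dotProduct, dotProduct_smul, smul_eq_mul] at h1 h2
  linear_combination -h1 - h2

include huS hv1 hvS in
lemma t_zero : ∀ j i : ℕ, 1 ≤ i → 1 ≤ j → i + j ≤ 2*k+1 → star (u i) ⬝ᵥ v j = 0 := by
  intro j
  induction j with
  | zero => omega
  | succ j ih =>
    intro i hi1 _ hij
    rcases Nat.eq_zero_or_pos j with rfl | hj1
    · exact t_base A lam0 u v huS hv1 hi1 (by omega)
    · rw [t_step A lam0 u v huS hvS hi1 (by omega) hj1 (by omega)]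
      exact ih (i+1) (by omega) hj1 (by omega)

include huS hvS in
lemma t_tau (hk : 1 ≤ k) :
    star (u (k+1)) ⬝ᵥ v (k+1) = star (u 1) ⬝ᵥ v (2*k+1) := by
  have key : ∀ d, d ≤ k → star (u (1+d)) ⬝ᵥ v (2*k+1-d) = star (u 1) ⬝ᵥ v (2*k+1) := by
    intro d
    induction d with
    | zero => intro _; norm_num
    | succ d ih =>
      intro hd
      have h1 : 2*k+1-d = (2*k-d)+1 := by omega
      have h2 : 2*k+1-(d+1) = 2*k-d := by omega
      have := t_step A lam0 u v huS hvS (i := 1+d) (j := 2*k-d)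
        (by omega) (by omega) (by omega) (by omega)
      rw [← h1] at this
      rw [h2, show 1+(d+1) = (1+d)+1 by omega, ← this]
      exact ih (by omega)
  have := key k (le_refl k)
  rw [show 1+k = k+1 by omega, show 2*k+1-k = k+1 by omega] at this
  exact this

end chains

end OddShiftAux
namespace OddShiftAux

variable {n : ℕ}

lemma eval_charpoly (M : Matrix (Fin n) (Fin n) ℂ) (x : ℂ) :
    (M.charpoly).eval x = (x • (1 : Matrix (Fin n) (Fin n) ℂ) - M).det := by
  rw [Matrix.charpoly, ← Polynomial.coe_evalRingHom, RingHom.map_det]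
  congr 1
  ext i j
  by_cases h : i = j <;>
    simp [Matrix.charmatrix_apply, Matrix.one_apply, h, Matrix.diagonal_apply]

section tau

variable {k : ℕ} (A : Matrix (Fin n) (Fin n) ℂ) (lam0 : ℂ) (u v : ℕ → Fin n → ℂ)

theorem tau_ne_zero
    (hk : 1 ≤ k)
    (halg : (Matrix.charpoly A).rootMultiplicity lam0 = 2 * k + 1)
    (hgeo : Module.finrank ℂ
      ↥(LinearMap.ker ((A - lam0 • (1 : Matrix (Fin n) (Fin n) ℂ)).mulVecLin)) = 1)
    (hu0 : u 1 ≠ 0) (hv0 : v 1 ≠ 0)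
    (hu1 : Matrix.vecMul (star (u 1)) A = lam0 • star (u 1))
    (huS : ∀ i, 1 ≤ i → i + 1 ≤ 2 * k + 1 →
      Matrix.vecMul (star (u (i + 1))) A = lam0 • star (u (i + 1)) + star (u i))
    (hv1 : A.mulVec (v 1) = lam0 • v 1)
    (hvS : ∀ j, 1 ≤ j → j + 1 ≤ 2 * k + 1 →
      A.mulVec (v (j + 1)) = lam0 • v (j + 1) + v j) :
    star (u (k+1)) ⬝ᵥ v (k+1) ≠ 0 := by
  intro h0
  set m : ℕ := 2*k+1 with hm
  set Bm : Matrix (Fin n) (Fin n) ℂ := A - lam0 • (1 : Matrix (Fin n) (Fin n) ℂ) with hBmdef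
  -- the functional star (u 1) kills all chain vectors
  have t1 : ∀ j, 1 ≤ j → j ≤ m → star (u 1) ⬝ᵥ v j = 0 := by
    intro j hj1 hj
    rcases Nat.lt_or_ge j (2*k+1) with h | h
    · exact t_zero A lam0 u v huS hv1 hvS j 1 le_rfl hj1 (by omega)
    · have hj' : j = 2*k+1 := by omega
      rw [hj', ← t_tau A lam0 u v huS hvS hk, h0]
  -- kernel of Bm is spanned by v 1
  have hv1ker : Bm *ᵥ v 1 = 0 := by
    rw [hBmdef, Matrix.sub_mulVec, hv1, Matrix.smul_mulVec, Matrix.one_mulVec, sub_self]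
  have hker1 : LinearMap.ker Bm.mulVecLin = Submodule.span ℂ {v 1} := by
    symm
    apply Submodule.eq_of_le_of_finrank_le
    · rw [Submodule.span_le, Set.singleton_subset_iff]
      simpa [Matrix.mulVecLin_apply] using hv1ker
    · rw [hgeo, finrank_span_singleton hv0]
  -- membership in ker Bm^j gives a chain expansion
  have hspan : ∀ j, 1 ≤ j → j ≤ m → ∀ z : Fin n → ℂ, (Bm^j) *ᵥ z = 0 →
      ∃ c : ℕ → ℂ, z = ∑ i ∈ Finset.range j, c i • v (i+1) := by
    intro j
    induction j with
    | zero => omega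
    | succ j ih =>
      intro _ hj z hz
      rcases Nat.eq_zero_or_pos j with rfl | hj1
      · rw [pow_one] at hz
        have : z ∈ Submodule.span ℂ {v 1} := by
          rw [← hker1]; simpa [Matrix.mulVecLin_apply] using hz
        obtain ⟨a, ha⟩ := Submodule.mem_span_singleton.mp this
        exact ⟨fun _ => a, by simp [← ha]⟩
      · have hBz : (Bm^j) *ᵥ (Bm *ᵥ z) = 0 := by
          rw [Matrix.mulVec_mulVec, ← pow_succ, hz]
        obtain ⟨c, hc⟩ := ih hj1 (by omega) _ hBz
        set y : Fin n → ℂ := ∑ i ∈ Finset.range j, c i • v (i+1+1) with hy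
        have hBy : Bm *ᵥ y = Bm *ᵥ z := by
          rw [hy]
          have hmap : Bm.mulVecLin (∑ i ∈ Finset.range j, c i • v (i+1+1))
              = ∑ i ∈ Finset.range j, c i • Bm.mulVecLin (v (i+1+1)) := by
            rw [map_sum]; exact Finset.sum_congr rfl fun i _ => by rw [_root_.map_smul]
          simp only [Matrix.mulVecLin_apply] at hmap
          rw [hmap, hc]
          apply Finset.sum_congr rfl
          intro i hi
          rw [Finset.mem_range] at hi
          congr 1
          have hstep := hvS (i+1) (by omega) (by omega)
          rw [hBmdef, Matrix.sub_mulVec, hstep, Matrix.smul_mulVec, Matrix.one_mulVec]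
          abel
        have hzy : z - y ∈ Submodule.span ℂ {v 1} := by
          rw [← hker1]
          simp only [LinearMap.mem_ker, Matrix.mulVecLin_apply, Matrix.mulVec_sub, hBy, sub_self]
        obtain ⟨a, ha⟩ := Submodule.mem_span_singleton.mp hzy
        refine ⟨fun i => if i = 0 then a else c (i-1), ?_⟩
        rw [Finset.sum_range_succ']
        simp only [Nat.succ_ne_zero, if_false, Nat.add_sub_cancel, if_pos, Nat.zero_add]
        rw [← hy, ha]
        abel
  -- Bezout decomposition from the characteristic polynomial
  have hch0 : (Matrix.charpoly A) ≠ 0 := (Matrix.charpoly_monic A).ne_zero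
  obtain ⟨q, hfac, hndvd⟩ :=
    (Matrix.charpoly A).exists_eq_pow_rootMultiplicity_mul_and_not_dvd hch0 lam0
  rw [halg] at hfac
  have hcop : IsCoprime ((X - C lam0) ^ m) q :=
    (((Polynomial.irreducible_X_sub_C lam0).coprime_iff_not_dvd.mpr hndvd)).pow_left
  obtain ⟨a, b, hab⟩ := hcop
  have hBm : (Polynomial.aeval A) (X - C lam0) = Bm := by
    rw [map_sub, Polynomial.aeval_X, Polynomial.aeval_C, Algebra.algebraMap_eq_smul_one]
  have h1 : (Polynomial.aeval A) a * Bm ^ m + (Polynomial.aeval A) b * (Polynomial.aeval A) q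
      = 1 := by
    have := congrArg (Polynomial.aeval A) hab
    simpa [map_add, _root_.map_mul, map_pow, _root_.map_one, hBm] using this
  have hcomm : (Polynomial.aeval A) a * Bm ^ m = Bm ^ m * (Polynomial.aeval A) a := by
    rw [← hBm, ← map_pow, ← _root_.map_mul, ← _root_.map_mul, mul_comm]
  have hkill : Bm ^ m * ((Polynomial.aeval A) b * (Polynomial.aeval A) q) = 0 := by
    rw [← hBm, ← map_pow, ← _root_.map_mul, ← _root_.map_mul, mul_left_comm, ← hfac,
      _root_.map_mul, Matrix.aeval_self_charpoly, mul_zero]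
  -- conclude: the functional star (u 1) vanishes identically
  have hu1B : star (u 1) ᵥ* Bm = 0 := by
    have hsm : star (u 1) ᵥ* (lam0 • (1:Matrix (Fin n) (Fin n) ℂ)) = lam0 • star (u 1) := by
      ext t
      simp [Matrix.vecMul, dotProduct, Matrix.one_apply, mul_ite,
        Finset.sum_ite_eq, Finset.sum_ite_eq', mul_comm]
    rw [hBmdef, Matrix.vecMul_sub, hu1, hsm, sub_self]
  have hu1Bm : star (u 1) ᵥ* (Bm ^ m) = 0 := by
    have : ∀ j : ℕ, star (u 1) ᵥ* (Bm ^ (j+1)) = 0 := by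
      intro j
      rw [pow_succ', ← Matrix.vecMul_vecMul, hu1B, Matrix.zero_vecMul]
    exact this (2*k)
  have hvanish : ∀ z : Fin n → ℂ, star (u 1) ⬝ᵥ z = 0 := by
    intro z
    have hz : z = (Bm ^ m) *ᵥ ((Polynomial.aeval A) a *ᵥ z)
        + ((Polynomial.aeval A) b * (Polynomial.aeval A) q) *ᵥ z := by
      rw [Matrix.mulVec_mulVec, ← hcomm, ← Matrix.add_mulVec, h1, Matrix.one_mulVec]
    have hykill : (Bm ^ m) *ᵥ (((Polynomial.aeval A) b * (Polynomial.aeval A) q) *ᵥ z) = 0 := by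
      rw [Matrix.mulVec_mulVec, hkill, Matrix.zero_mulVec]
    obtain ⟨c, hcrep⟩ := hspan m (by omega) le_rfl _ hykill
    rw [hz, dotProduct_add]
    have e1 : star (u 1) ⬝ᵥ ((Bm ^ m) *ᵥ ((Polynomial.aeval A) a *ᵥ z)) = 0 := by
      rw [dotProduct_mulVec, hu1Bm, zero_dotProduct]
    have e2 : star (u 1) ⬝ᵥ (((Polynomial.aeval A) b * (Polynomial.aeval A) q) *ᵥ z) = 0 := by
      rw [hcrep, dot_sum]
      apply Finset.sum_eq_zero
      intro i hi
      rw [Finset.mem_range] at hi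
      rw [dotProduct_smul, t1 (i+1) (by omega) (by omega), smul_zero]
    rw [e1, e2, add_zero]
  apply hu0
  funext s
  have := hvanish (Pi.single s 1)
  rw [dotProduct_single, mul_one] at this
  have : star (u 1 s) = 0 := this
  simpa using congrArg star this

end tau

end OddShiftAux
namespace OddShiftAux

section pointwise

variable {n k : ℕ}

lemma blocks_mul (Y1 : Matrix (Fin k) (Fin n) ℂ) (Y2 : Matrix (Fin 1) (Fin n) ℂ)
    (Y3 : Matrix (Fin k) (Fin n) ℂ) (K : Matrix (Fin n) (Fin n) ℂ)
    (Z1 : Matrix (Fin n) (Fin k) ℂ) (Z2 : Matrix (Fin n) (Fin 1) ℂ) (Z3 : Matrix (Fin n) (Fin k) ℂ) :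
    fromRows (fromRows Y1 Y2) Y3 * (K * fromCols (fromCols Z1 Z2) Z3)
      = fromBlocks (fromBlocks (Y1 * (K * Z1)) (Y1 * (K * Z2)) (Y2 * (K * Z1)) (Y2 * (K * Z2)))
          (fromRows (Y1 * (K * Z3)) (Y2 * (K * Z3)))
          (fromCols (Y3 * (K * Z1)) (Y3 * (K * Z2))) (Y3 * (K * Z3)) := by
  simp only [Matrix.mul_fromCols, Matrix.fromRows_mul,
    Matrix.fromRows_fromCols_eq_fromBlocks, Matrix.fromCols_fromRows_eq_fromBlocks]
  ext ((i|i)|i) ((j|j)|j) <;> simp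

lemma fromBlocks_sub' {l m o p : Type*} (A A' : Matrix l m ℂ) (B B' : Matrix l p ℂ)
    (C C' : Matrix o m ℂ) (D D' : Matrix o p ℂ) :
    fromBlocks A B C D - fromBlocks A' B' C' D'
      = fromBlocks (A - A') (B - B') (C - C') (D - D') := by
  ext (i|i) (j|j) <;> simp

lemma entry_helper {a b : ℕ} (Y : Matrix (Fin a) (Fin n) ℂ) (K : Matrix (Fin n) (Fin n) ℂ)
    (Z : Matrix (Fin n) (Fin b) ℂ) (i : Fin a) (j : Fin b) :
    (Y * (K * Z)) i j = (fun s => Y i s) ⬝ᵥ (K *ᵥ (fun t => Z t j)) := by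
  simp only [Matrix.mul_apply, Matrix.mulVec, dotProduct, Finset.mul_sum]

theorem pointwise
    (A : Matrix (Fin n) (Fin n) ℂ) (lam0 lam1 x : ℂ)
    (u v : ℕ → Fin n → ℂ)
    (hk : 1 ≤ k)
    (hu1 : Matrix.vecMul (star (u 1)) A = lam0 • star (u 1))
    (huS : ∀ i, 1 ≤ i → i + 1 ≤ 2 * k + 1 →
      Matrix.vecMul (star (u (i + 1))) A = lam0 • star (u (i + 1)) + star (u i))
    (hv1 : A.mulVec (v 1) = lam0 • v 1)
    (hvS : ∀ j, 1 ≤ j → j + 1 ≤ 2 * k + 1 →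
      A.mulVec (v (j + 1)) = lam0 • v (j + 1) + v j)
    (R L : Matrix (Fin n) (Fin k) ℂ)
    (hR : Rᴴ * chainMat k v = 1)
    (hL : (chainMat k u)ᴴ * L = 1)
    (r : Fin n → ℂ)
    (hsr : star r = (star (u (k+1)) ⬝ᵥ v (k+1))⁻¹ • star (u (k+1)))
    (htau : star (u (k+1)) ⬝ᵥ v (k+1) ≠ 0)
    (hdet : IsUnit (x • (1 : Matrix (Fin n) (Fin n) ℂ) - A).det)
    (hx0 : x ≠ lam0) :
    (x • (1 : Matrix (Fin n) (Fin n) ℂ) - (A + (lam1 - lam0) • (chainMat k v * Rᴴ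
        + Matrix.vecMulVec (v (k + 1)) (star r) + L * (chainMat k u)ᴴ))).det
      = (x • (1 : Matrix (Fin n) (Fin n) ℂ) - A).det
        * (1 - (lam1 - lam0) * (x - lam0)⁻¹)^(2*k+1) := by
  set g : ℂ := (x - lam0)⁻¹ with hgdef
  set c : ℂ := lam1 - lam0 with hcdef
  set S : Matrix (Fin n) (Fin n) ℂ := x • (1 : Matrix (Fin n) (Fin n) ℂ) - A with hSdef
  have hg : (x - lam0) * g = 1 := mul_inv_cancel₀ (sub_ne_zero.mpr hx0)
  -- actions of S
  have hSmul : ∀ w : Fin n → ℂ, S *ᵥ w = x • w - A *ᵥ w := by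
    intro w
    rw [hSdef, Matrix.sub_mulVec, Matrix.smul_mulVec, Matrix.one_mulVec]
  have hsm1 : ∀ w : Fin n → ℂ, w ᵥ* (x • (1 : Matrix (Fin n) (Fin n) ℂ)) = x • w := by
    intro w
    ext t
    simp [Matrix.vecMul, dotProduct, Matrix.one_apply, mul_ite,
      Finset.sum_ite_eq, Finset.sum_ite_eq', mul_comm]
  have hSvec : ∀ w : Fin n → ℂ, w ᵥ* S = x • w - w ᵥ* A := by
    intro w
    rw [hSdef, Matrix.vecMul_sub, hsm1]
  -- resolvent action on right chain
  have hSv : ∀ j, 1 ≤ j → j ≤ 2*k+1 → S *ᵥ resVec g v j = v j := by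
    intro j
    induction j with
    | zero => omega
    | succ j ih =>
      intro _ hj
      show S *ᵥ (g • (resVec g v j + v (j+1))) = v (j+1)
      rw [Matrix.mulVec_smul, Matrix.mulVec_add]
      rcases Nat.eq_zero_or_pos j with rfl | hj1
      · show g • (S *ᵥ (0 : Fin n → ℂ) + S *ᵥ v 1) = v 1
        rw [Matrix.mulVec_zero, zero_add, hSmul, hv1, ← sub_smul, smul_smul,
          mul_comm, hg, one_smul]
      · rw [ih hj1 (by omega), hSmul, hvS j hj1 hj]
        have e : v j + (x • v (j+1) - (lam0 • v (j+1) + v j)) = (x - lam0) • v (j+1) := by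
          rw [sub_smul]; abel
        rw [e, smul_smul, mul_comm g _, hg, one_smul]
  have hKv : ∀ j, 1 ≤ j → j ≤ 2*k+1 → S⁻¹ *ᵥ v j = resVec g v j := by
    intro j h1 h2
    rw [← hSv j h1 h2, Matrix.mulVec_mulVec, Matrix.nonsing_inv_mul S hdet, Matrix.one_mulVec]
  -- resolvent action on left chain
  have hSu : ∀ j, 1 ≤ j → j ≤ 2*k+1 →
      (resVec g (fun l => star (u l)) j) ᵥ* S = star (u j) := by
    intro j
    induction j with
    | zero => omega
    | succ j ih =>
      intro _ hj
      show (g • (resVec g (fun l => star (u l)) j + star (u (j+1)))) ᵥ* S = star (u (j+1))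
      rw [Matrix.smul_vecMul, Matrix.add_vecMul]
      rcases Nat.eq_zero_or_pos j with rfl | hj1
      · show g • ((0 : Fin n → ℂ) ᵥ* S + star (u 1) ᵥ* S) = star (u 1)
        rw [Matrix.zero_vecMul, zero_add, hSvec, hu1, ← sub_smul, smul_smul, mul_comm, hg, one_smul]
      · rw [ih hj1 (by omega), hSvec, huS j hj1 hj]
        have e : star (u j) + (x • star (u (j+1)) - (lam0 • star (u (j+1)) + star (u j)))
            = (x - lam0) • star (u (j+1)) := by
          rw [sub_smul]; abel
        rw [e, smul_smul, mul_comm g _, hg, one_smul]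
  have hKu : ∀ j, 1 ≤ j → j ≤ 2*k+1 →
      (star (u j)) ᵥ* S⁻¹ = resVec g (fun l => star (u l)) j := by
    intro j h1 h2
    rw [← hSu j h1 h2, Matrix.vecMul_vecMul, Matrix.mul_nonsing_inv S hdet, Matrix.vecMul_one]
  -- delta lemmas from the inverses
  have hRd : ∀ (i : Fin k) (l : ℕ) (hl : l < k),
      (fun s => Rᴴ i s) ⬝ᵥ v (l+1) = if (i:ℕ) = l then 1 else 0 := by
    intro i l hl
    have h := congrFun (congrFun hR i) ⟨l, hl⟩
    rw [Matrix.mul_apply, Matrix.one_apply] at h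
    have h2 : (fun s => Rᴴ i s) ⬝ᵥ v (l+1) = if i = (⟨l, hl⟩ : Fin k) then 1 else 0 := h
    rw [h2]
    congr 1
    simp [Fin.ext_iff]
  have hLd : ∀ (l : ℕ) (hl : l < k) (c' : Fin k),
      (star (u (l+1))) ⬝ᵥ (fun t => L t c') = if l = (c' : ℕ) then 1 else 0 := by
    intro l hl c'
    have h := congrFun (congrFun hL ⟨l, hl⟩) c'
    rw [Matrix.mul_apply, Matrix.one_apply] at h
    have h2 : (star (u (l+1))) ⬝ᵥ (fun t => L t c') = if (⟨l, hl⟩ : Fin k) = c' then 1 else 0 := h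
    rw [h2]
    congr 1
    simp [Fin.ext_iff]
  -- block matrices
  have hvmrm : (Matrix.of fun s (_ : Fin 1) => v (k+1) s)
        * (Matrix.of fun (_ : Fin 1) t => star r t)
      = Matrix.vecMulVec (v (k + 1)) (star r) := by
    ext s t
    simp [Matrix.mul_apply, Matrix.vecMulVec_apply, Fin.sum_univ_one]
  have hP : chainMat k v * Rᴴ + Matrix.vecMulVec (v (k + 1)) (star r) + L * (chainMat k u)ᴴ
      = fromCols (fromCols (chainMat k v) (Matrix.of fun s (_ : Fin 1) => v (k+1) s)) L
        * fromRows (fromRows Rᴴ (Matrix.of fun (_ : Fin 1) t => star r t)) (chainMat k u)ᴴ := by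
    rw [Matrix.fromCols_mul_fromRows, Matrix.fromCols_mul_fromRows, hvmrm]
  set Vm : Matrix (Fin n) (Fin k) ℂ := chainMat k v with hVm
  set Um : Matrix (Fin k) (Fin n) ℂ := (chainMat k u)ᴴ with hUm
  set vm : Matrix (Fin n) (Fin 1) ℂ := Matrix.of fun s (_ : Fin 1) => v (k+1) s with hvm
  set rm : Matrix (Fin 1) (Fin n) ℂ := Matrix.of fun (_ : Fin 1) t => star r t with hrm
  set Mb : Matrix (Fin n) ((Fin k ⊕ Fin 1) ⊕ Fin k) ℂ := fromCols (fromCols Vm vm) L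
    with hMb
  set Nb : Matrix ((Fin k ⊕ Fin 1) ⊕ Fin k) (Fin n) ℂ := fromRows (fromRows Rᴴ rm) Um with hNb
  -- determinant reduction to the small matrix
  have step1 : x • (1 : Matrix (Fin n) (Fin n) ℂ) - (A + c • (Mb * Nb)) = S - (c • Mb) * Nb := by
    rw [sub_add_eq_sub_sub, ← hSdef, Matrix.smul_mul]
  have step2 : S * ((1 : Matrix (Fin n) (Fin n) ℂ) - S⁻¹ * ((c • Mb) * Nb))
      = S - (c • Mb) * Nb := by
    rw [Matrix.mul_sub, Matrix.mul_one, ← Matrix.mul_assoc, Matrix.mul_nonsing_inv S hdet,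
      Matrix.one_mul]
  have step3 : (1 : Matrix (Fin n) (Fin n) ℂ) - S⁻¹ * ((c • Mb) * Nb)
      = 1 + (-(S⁻¹ * (c • Mb))) * Nb := by
    rw [Matrix.neg_mul, Matrix.mul_assoc, ← sub_eq_add_neg]
  have step4 : (1 : Matrix ((Fin k ⊕ Fin 1) ⊕ Fin k) ((Fin k ⊕ Fin 1) ⊕ Fin k) ℂ)
        + Nb * (-(S⁻¹ * (c • Mb)))
      = 1 - c • (Nb * (S⁻¹ * Mb)) := by
    rw [Matrix.mul_neg, ← sub_eq_add_neg, Matrix.mul_smul, Matrix.mul_smul]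
  have hdet2 : (x • (1 : Matrix (Fin n) (Fin n) ℂ) - (A + c • (Mb * Nb))).det
      = S.det * ((1 : Matrix ((Fin k ⊕ Fin 1) ⊕ Fin k) ((Fin k ⊕ Fin 1) ⊕ Fin k) ℂ)
          - c • (Nb * (S⁻¹ * Mb))).det := by
    rw [step1, ← step2, Matrix.det_mul, step3, Matrix.det_one_add_mul_comm, step4]
  -- block decomposition of the small matrix
  have hHb : Nb * (S⁻¹ * Mb)
      = fromBlocks
          (fromBlocks (Rᴴ * (S⁻¹ * Vm)) (Rᴴ * (S⁻¹ * vm)) (rm * (S⁻¹ * Vm)) (rm * (S⁻¹ * vm)))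
          (fromRows (Rᴴ * (S⁻¹ * L)) (rm * (S⁻¹ * L)))
          (fromCols (Um * (S⁻¹ * Vm)) (Um * (S⁻¹ * vm))) (Um * (S⁻¹ * L)) :=
    blocks_mul Rᴴ rm Um S⁻¹ Vm vm L
  -- rows and columns of the factors
  have hVcol : ∀ j : Fin k, (fun t => Vm t j) = v ((j:ℕ)+1) := fun j => rfl
  have hvmcol : ∀ j : Fin 1, (fun t => vm t j) = v (k+1) := fun _ => rfl
  have hUrow : ∀ i : Fin k, (fun s => Um i s) = star (u ((i:ℕ)+1)) := by
    intro i; funext s; simp [hUm, chainMat]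
  have hrmrow : ∀ i : Fin 1, (fun s => rm i s) = star r := fun _ => rfl
  -- entries of the T block
  have hT : ∀ (i j : Fin k), (Rᴴ * (S⁻¹ * Vm)) i j
      = ∑ l ∈ Finset.range ((j:ℕ)+1), g ^ ((j:ℕ)+1-l) * ((fun s => Rᴴ i s) ⬝ᵥ v (l+1)) := by
    intro i j
    rw [entry_helper, hVcol, hKv ((j:ℕ)+1) (by omega) (by have := j.isLt; omega), dot_resVec]
  have hTlow : ∀ i j : Fin k, (j:ℕ) < (i:ℕ) → (Rᴴ * (S⁻¹ * Vm)) i j = 0 := by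
    intro i j hij
    rw [hT]
    apply Finset.sum_eq_zero
    intro l hl
    rw [Finset.mem_range] at hl
    rw [hRd i l (by have := j.isLt; omega), if_neg (by omega), mul_zero]
  have hTdiag : ∀ i : Fin k, (Rᴴ * (S⁻¹ * Vm)) i i = g := by
    intro i
    rw [hT, Finset.sum_eq_single_of_mem ((i:ℕ)) (Finset.mem_range.mpr (by omega))]
    · rw [hRd i i i.isLt, if_pos rfl, show (i:ℕ)+1-(i:ℕ) = 1 from by omega, pow_one, mul_one]
    · intro l hl hne
      rw [Finset.mem_range] at hl
      rw [hRd i l (by have := i.isLt; omega), if_neg (fun h => hne h.symm), mul_zero]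
  -- the (r, V) block vanishes
  have hc1 : rm * (S⁻¹ * Vm) = 0 := by
    ext i j
    rw [entry_helper, hVcol, hKv ((j:ℕ)+1) (by omega) (by have := j.isLt; omega), hrmrow, hsr,
      smul_dotProduct, dot_resVec]
    rw [Finset.sum_eq_zero, smul_zero, Matrix.zero_apply]
    intro l hl
    rw [Finset.mem_range] at hl
    rw [t_zero A lam0 u v huS hv1 hvS (l+1) (k+1) (by omega) (by omega)
      (by have := j.isLt; omega), mul_zero]
  -- the (r, v) entry equals g
  have hdVe : ∀ (i j : Fin 1), (rm * (S⁻¹ * vm)) i j = g := by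
    intro i j
    rw [entry_helper, hvmcol, hKv (k+1) (by omega) (by omega), hrmrow, hsr,
      smul_dotProduct, dot_resVec]
    rw [Finset.sum_eq_single_of_mem k (Finset.mem_range.mpr (by omega))]
    · rw [show k+1-k = 1 from by omega, pow_one, smul_eq_mul]
      field_simp
    · intro l hl hne
      rw [Finset.mem_range] at hl
      rw [t_zero A lam0 u v huS hv1 hvS (l+1) (k+1) (by omega) (by omega) (by omega), mul_zero]
  -- the bottom-left blocks vanish
  have hf1 : Um * (S⁻¹ * Vm) = 0 := by
    ext i j
    rw [entry_helper, hVcol, hUrow, dotProduct_mulVec, hKu ((i:ℕ)+1) (by omega)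
      (by have := i.isLt; omega), resVec_dot]
    rw [Finset.sum_eq_zero, Matrix.zero_apply]
    intro l hl
    rw [Finset.mem_range] at hl
    rw [t_zero A lam0 u v huS hv1 hvS ((j:ℕ)+1) (l+1) (by omega) (by omega)
      (by have := i.isLt; have := j.isLt; omega), mul_zero]
  have hf2 : Um * (S⁻¹ * vm) = 0 := by
    ext i j
    rw [entry_helper, hvmcol, hUrow, dotProduct_mulVec, hKu ((i:ℕ)+1) (by omega)
      (by have := i.isLt; omega), resVec_dot]
    rw [Finset.sum_eq_zero, Matrix.zero_apply]
    intro l hl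
    rw [Finset.mem_range] at hl
    rw [t_zero A lam0 u v huS hv1 hvS (k+1) (l+1) (by omega) (by omega)
      (by have := i.isLt; omega), mul_zero]
  -- entries of the W block
  have hW : ∀ (i j : Fin k), (Um * (S⁻¹ * L)) i j
      = ∑ l ∈ Finset.range ((i:ℕ)+1), g ^ ((i:ℕ)+1-l) * (star (u (l+1)) ⬝ᵥ (fun t => L t j)) := by
    intro i j
    rw [entry_helper, hUrow, dotProduct_mulVec, hKu ((i:ℕ)+1) (by omega)
      (by have := i.isLt; omega), resVec_dot]
  have hWup : ∀ i j : Fin k, (i:ℕ) < (j:ℕ) → (Um * (S⁻¹ * L)) i j = 0 := by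
    intro i j hij
    rw [hW]
    apply Finset.sum_eq_zero
    intro l hl
    rw [Finset.mem_range] at hl
    rw [hLd l (by have := i.isLt; omega) j, if_neg (by omega), mul_zero]
  have hWdiag : ∀ i : Fin k, (Um * (S⁻¹ * L)) i i = g := by
    intro i
    rw [hW, Finset.sum_eq_single_of_mem ((i:ℕ)) (Finset.mem_range.mpr (by omega))]
    · rw [hLd (i:ℕ) i.isLt i, if_pos rfl, show (i:ℕ)+1-(i:ℕ) = 1 from by omega, pow_one, mul_one]
    · intro l hl hne
      rw [Finset.mem_range] at hl
      rw [hLd l (by have := i.isLt; omega) i, if_neg (fun h => hne h), mul_zero]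
  -- determinant of the small matrix
  have hdetT : ((1 : Matrix (Fin k) (Fin k) ℂ) - c • (Rᴴ * (S⁻¹ * Vm))).det = (1 - c*g)^k := by
    have htri : ((1 : Matrix (Fin k) (Fin k) ℂ) - c • (Rᴴ * (S⁻¹ * Vm))).BlockTriangular id := by
      intro i j hij
      have hij' : (j:ℕ) < (i:ℕ) := hij
      have hne : i ≠ j := by intro h; subst h; omega
      simp [Matrix.sub_apply, Matrix.smul_apply, hTlow i j hij', Matrix.one_apply, hne]
    rw [Matrix.det_of_upperTriangular htri]
    have : ∀ i : Fin k, ((1 : Matrix (Fin k) (Fin k) ℂ) - c • (Rᴴ * (S⁻¹ * Vm))) i i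
        = 1 - c * g := by
      intro i
      simp [Matrix.sub_apply, Matrix.smul_apply, hTdiag i, Matrix.one_apply]
    rw [Finset.prod_congr rfl (fun i _ => this i), Finset.prod_const, Finset.card_univ,
      Fintype.card_fin]
  have hdetW : ((1 : Matrix (Fin k) (Fin k) ℂ) - c • (Um * (S⁻¹ * L))).det = (1 - c*g)^k := by
    have htri : ((1 : Matrix (Fin k) (Fin k) ℂ) - c • (Um * (S⁻¹ * L))).BlockTriangular
        ⇑OrderDual.toDual := by
      intro i j hij
      have hij' : (i:ℕ) < (j:ℕ) := hij
      have hne : i ≠ j := by intro h; subst h; omega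
      simp [Matrix.sub_apply, Matrix.smul_apply, hWup i j hij', Matrix.one_apply, hne]
    rw [Matrix.det_of_lowerTriangular _ htri]
    have : ∀ i : Fin k, ((1 : Matrix (Fin k) (Fin k) ℂ) - c • (Um * (S⁻¹ * L))) i i
        = 1 - c * g := by
      intro i
      simp [Matrix.sub_apply, Matrix.smul_apply, hWdiag i, Matrix.one_apply]
    rw [Finset.prod_congr rfl (fun i _ => this i), Finset.prod_const, Finset.card_univ,
      Fintype.card_fin]
  have hdetd : ((1 : Matrix (Fin 1) (Fin 1) ℂ) - c • (rm * (S⁻¹ * vm))).det = 1 - c*g := by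
    rw [Matrix.det_fin_one]
    simp [Matrix.sub_apply, Matrix.smul_apply, hdVe, Matrix.one_apply]
  have hbl0 : (0 : Matrix (Fin k) (Fin k ⊕ Fin 1) ℂ)
      - c • fromCols (Um * (S⁻¹ * Vm)) (Um * (S⁻¹ * vm)) = 0 := by
    rw [hf1, hf2]
    ext i (j|j) <;> simp
  have hcl0 : (0 : Matrix (Fin 1) (Fin k) ℂ) - c • (rm * (S⁻¹ * Vm)) = 0 := by
    rw [hc1]; simp
  have hdetsmall : ((1 : Matrix ((Fin k ⊕ Fin 1) ⊕ Fin k) ((Fin k ⊕ Fin 1) ⊕ Fin k) ℂ)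
      - c • (Nb * (S⁻¹ * Mb))).det = (1 - c*g)^(2*k+1) := by
    rw [hHb, show (1 : Matrix ((Fin k ⊕ Fin 1) ⊕ Fin k) ((Fin k ⊕ Fin 1) ⊕ Fin k) ℂ)
        = fromBlocks 1 0 0 1 from Matrix.fromBlocks_one.symm,
      Matrix.fromBlocks_smul, fromBlocks_sub', hbl0, Matrix.det_fromBlocks_zero₂₁,
      show (1 : Matrix (Fin k ⊕ Fin 1) (Fin k ⊕ Fin 1) ℂ) = fromBlocks 1 0 0 1
        from Matrix.fromBlocks_one.symm,
      Matrix.fromBlocks_smul, fromBlocks_sub', hcl0, Matrix.det_fromBlocks_zero₂₁,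
      hdetT, hdetd, hdetW]
    ring
  rw [hP, hdet2, hdetsmall]

end pointwise

end OddShiftAux

open OddShiftAux in
/-- Odd-multiplicity shift: the rank-`(2k+1)` update replaces the `2k+1` copies
of `λ₀` by `2k+1` copies of `λ₁` in the characteristic polynomial. -/
theorem odd_shift_charpoly {n k : ℕ}
    (A : Matrix (Fin n) (Fin n) ℂ) (lam0 lam1 : ℂ)
    (u v : ℕ → Fin n → ℂ)
    (hk : 1 ≤ k)
    (halg : (Matrix.charpoly A).rootMultiplicity lam0 = 2 * k + 1)
    (hgeo : Module.finrank ℂ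
      ↥(LinearMap.ker ((A - lam0 • (1 : Matrix (Fin n) (Fin n) ℂ)).mulVecLin)) = 1)
    (hu0 : u 1 ≠ 0) (hv0 : v 1 ≠ 0)
    (hu1 : Matrix.vecMul (star (u 1)) A = lam0 • star (u 1))
    (huS : ∀ i, 1 ≤ i → i + 1 ≤ 2 * k + 1 →
      Matrix.vecMul (star (u (i + 1))) A = lam0 • star (u (i + 1)) + star (u i))
    (hv1 : A.mulVec (v 1) = lam0 • v 1)
    (hvS : ∀ j, 1 ≤ j → j + 1 ≤ 2 * k + 1 →
      A.mulVec (v (j + 1)) = lam0 • v (j + 1) + v j)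
    (R L : Matrix (Fin n) (Fin k) ℂ)
    (hR : Rᴴ * chainMat k v = 1)
    (hL : (chainMat k u)ᴴ * L = 1)
    (r : Fin n → ℂ)
    (hr : r = (dotProduct (star (v (k + 1))) (u (k + 1)))⁻¹ • u (k + 1)) :
    (A + (lam1 - lam0) • (chainMat k v * Rᴴ
        + Matrix.vecMulVec (v (k + 1)) (star r) + L * (chainMat k u)ᴴ)).charpoly
        * (X - C lam0) ^ (2 * k + 1)
      = A.charpoly * (X - C lam1) ^ (2 * k + 1) := by
  have htau : star (u (k+1)) ⬝ᵥ v (k+1) ≠ 0 :=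
    tau_ne_zero A lam0 u v hk halg hgeo hu0 hv0 hu1 huS hv1 hvS
  have hstar : star (dotProduct (star (v (k + 1))) (u (k + 1)))
      = star (u (k+1)) ⬝ᵥ v (k+1) := by
    simp [dotProduct, mul_comm]
  have hsr : star r = (star (u (k+1)) ⬝ᵥ v (k+1))⁻¹ • star (u (k+1)) := by
    rw [hr, star_smul, star_inv₀, hstar]
  have hch0 : A.charpoly ≠ 0 := (Matrix.charpoly_monic A).ne_zero
  have hroot : A.charpoly.IsRoot lam0 :=
    (Polynomial.rootMultiplicity_pos hch0).mp (by rw [halg]; omega)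
  apply Polynomial.eq_of_infinite_eval_eq
  have hinf : {x : ℂ | ¬ A.charpoly.IsRoot x}.Infinite := by
    have hfin := Polynomial.finite_setOf_isRoot (p := A.charpoly) hch0
    simpa [Set.compl_setOf] using hfin.infinite_compl
  apply hinf.mono
  intro x hx
  simp only [Set.mem_setOf_eq] at hx ⊢
  have hx' : (x • (1 : Matrix (Fin n) (Fin n) ℂ) - A).det ≠ 0 := by
    rw [← OddShiftAux.eval_charpoly]; exact hx
  have hx0 : x ≠ lam0 := by rintro rfl; exact hx hroot
  simp only [Polynomial.eval_mul, Polynomial.eval_pow, Polynomial.eval_sub,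
    Polynomial.eval_X, Polynomial.eval_C]
  rw [OddShiftAux.eval_charpoly, OddShiftAux.eval_charpoly]
  rw [pointwise A lam0 lam1 x u v hk hu1 huS hv1 hvS R L hR hL r hsr htau
    (isUnit_iff_ne_zero.mpr hx') hx0]
  have hxl : x - lam0 ≠ 0 := sub_ne_zero.mpr hx0
  have hbase : (1 - (lam1 - lam0) * (x - lam0)⁻¹) * (x - lam0) = x - lam1 := by
    field_simp
    ring
  rw [mul_assoc, ← mul_pow, hbase]
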